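/- arXiv:0711.4004 — 2 statements merged into one kernel-verified Lean document; each statement's English description precedes it below -/
import Mathlib

section
/- (Lemma D.) Assume Σ_{r=0}^{2} ∫ |f_{ε+Z}^{(r)}(v)|² dv < ∞ and E[|Y_1|^κ] < ∞ for some κ > 0. Then for r = 0, 1, 2 and all y ∈ ℝ, F_Y^{(r)}(y) = E[F_{ε+Z}^{(r)}(y − X_{1,0})], where X_{1,0} = X_1 − Z_1 = Σ_{k=1}^∞ c_k Z_{1−k}. -/
open MeasureTheory ProbabilityTheory Filter Asymptotics
open scoped Real Topology NNReal ProbabilityTheory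

noncomputable section



/-- isolated zeros with nonzero derivative form a countable set -/
lemma aux_countable_kinks {g : ℝ → ℝ} (hg : Differentiable ℝ g) :
    {x : ℝ | g x = 0 ∧ deriv g x ≠ 0}.Countable := by
  set s := {x : ℝ | g x = 0 ∧ deriv g x ≠ 0} with hs
  have hdisc : DiscreteTopology s := by
    rw [discreteTopology_subtype_iff]
    intro x hx
    rw [inf_principal_eq_bot]
    have h1 : ∀ᶠ z in 𝓝[≠] x, g z ≠ g x := (hg x).hasDerivAt.eventually_ne hx.2
    filter_upwards [h1] with z hz
    intro hzs
    exact hz (by rw [hzs.1, hx.1])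
  have : Countable s := TopologicalSpace.separableSpace_iff_countable.mp inferInstance
  exact Set.countable_coe_iff.mp this

/-- the positive part of a differentiable function is differentiable away from
"kink" points. -/
lemma aux_posPart_diff {g : ℝ → ℝ} (hg : Differentiable ℝ g) {x : ℝ}
    (hx : ¬(g x = 0 ∧ deriv g x ≠ 0)) :
    DifferentiableAt ℝ (fun y => max (g y) 0) x := by
  rcases lt_trichotomy (g x) 0 with h | h | h
  · have hev : (fun y => max (g y) 0) =ᶠ[𝓝 x] (fun _ => (0:ℝ)) := by
      have : g ⁻¹' (Set.Iio 0) ∈ 𝓝 x := (hg x).continuousAt.preimage_mem_nhds (Iio_mem_nhds h)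
      filter_upwards [this] with y hy
      exact max_eq_right hy.le
    exact (differentiableAt_const (0:ℝ)).congr_of_eventuallyEq hev
  · -- g x = 0, so deriv g x = 0
    have hd : deriv g x = 0 := by
      by_contra hd; exact hx ⟨h, hd⟩
    have hgo : HasDerivAt g 0 x := by simpa [hd] using (hg x).hasDerivAt
    have : HasDerivAt (fun y => max (g y) 0) 0 x := by
      rw [hasDerivAt_iff_isLittleO]
      have h2 := (hasDerivAt_iff_isLittleO.mp hgo)
      simp only [smul_zero, sub_zero] at h2 ⊢
      have hbig : (fun y => max (g y) 0 - max (g x) 0) =O[𝓝 x] (fun y => g y - g x) := by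
        apply Asymptotics.IsBigO.of_bound 1
        apply Filter.Eventually.of_forall
        intro y
        rw [one_mul]
        have := abs_max_sub_max_le_abs (g y) (g x) 0
        simpa [Real.norm_eq_abs] using this
      exact hbig.trans_isLittleO h2
    exact this.differentiableAt
  · have hev : (fun y => max (g y) 0) =ᶠ[𝓝 x] g := by
      have : g ⁻¹' (Set.Ioi 0) ∈ 𝓝 x := (hg x).continuousAt.preimage_mem_nhds (Ioi_mem_nhds h)
      filter_upwards [this] with y hy
      exact max_eq_left hy.le
    exact (hg x).congr_of_eventuallyEq hev


lemma aux_indep_sup {Ω : Type} {mΩ : MeasurableSpace Ω} {μ : Measure Ω}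
    [IsProbabilityMeasure μ] {m1 m2 m3 : MeasurableSpace Ω}
    (h1 : m1 ≤ mΩ) (h2 : m2 ≤ mΩ) (h3 : m3 ≤ mΩ)
    (h12 : Indep m1 m2 μ) (h12_3 : Indep (m1 ⊔ m2) m3 μ) :
    Indep m1 (m2 ⊔ m3) μ := by
  set p1 : Set (Set Ω) := {s | MeasurableSet[m1] s} with hp1def
  set p2 : Set (Set Ω) :=
    {s | ∃ B C, MeasurableSet[m2] B ∧ MeasurableSet[m3] C ∧ s = B ∩ C} with hp2def
  have hp1 : IsPiSystem p1 := fun s hs t ht _ => hs.inter ht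
  have hp2 : IsPiSystem p2 := by
    rintro s ⟨B, C, hB, hC, rfl⟩ t ⟨B', C', hB', hC', rfl⟩ _
    exact ⟨B ∩ B', C ∩ C', hB.inter hB', hC.inter hC', by ext x; simp; tauto⟩
  have hgen1 : m1 = MeasurableSpace.generateFrom p1 :=
    (@MeasurableSpace.generateFrom_measurableSet Ω m1).symm
  have hgen2 : m2 ⊔ m3 = MeasurableSpace.generateFrom p2 := by
    apply le_antisymm
    · apply sup_le
      · intro s hs
        exact MeasurableSpace.measurableSet_generateFrom
          ⟨s, Set.univ, hs, MeasurableSet.univ, (Set.inter_univ s).symm⟩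
      · intro s hs
        exact MeasurableSpace.measurableSet_generateFrom
          ⟨Set.univ, s, MeasurableSet.univ, hs, (Set.univ_inter s).symm⟩
    · apply MeasurableSpace.generateFrom_le
      rintro s ⟨B, C, hB, hC, rfl⟩
      have hB2 : MeasurableSet[m2 ⊔ m3] B := (MeasurableSpace.le_def.mp le_sup_left) B hB
      have hC2 : MeasurableSet[m2 ⊔ m3] C := (MeasurableSpace.le_def.mp le_sup_right) C hC
      exact hB2.inter hC2
  have h123 := (Indep_iff _ _ _).mp h12_3
  have h12' := (Indep_iff _ _ _).mp h12
  refine IndepSets.indep h1 (sup_le h2 h3) hp1 hp2 hgen1 hgen2 ?_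
  rw [IndepSets_iff]
  rintro A s hA ⟨B, C, hB, hC, rfl⟩
  have hA' : MeasurableSet[m1 ⊔ m2] A :=
    (MeasurableSpace.le_def.mp (le_sup_left : m1 ≤ m1 ⊔ m2)) A hA
  have hBm : MeasurableSet[m1 ⊔ m2] B :=
    (MeasurableSpace.le_def.mp (le_sup_right : m2 ≤ m1 ⊔ m2)) B hB
  have hAB : MeasurableSet[m1 ⊔ m2] (A ∩ B) := hA'.inter hBm
  calc μ (A ∩ (B ∩ C)) = μ ((A ∩ B) ∩ C) := by rw [Set.inter_assoc]
    _ = μ (A ∩ B) * μ C := h123 _ _ hAB hC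
    _ = (μ A * μ B) * μ C := by rw [h12' _ _ hA hB]
    _ = μ A * (μ B * μ C) := by ring
    _ = μ A * μ (B ∩ C) := by rw [h123 _ _ hBm hC]


lemma aux_measurable_limit {Ω : Type} [m : MeasurableSpace Ω] {f : ℕ → Ω → ℝ} {g : Ω → ℝ}
    (hf : ∀ n, Measurable[m] (f n))
    (h : ∀ ω, Filter.Tendsto (fun n => f n ω) atTop (𝓝 (g ω))) :
    Measurable[m] g :=
  measurable_of_tendsto_metrizable hf (tendsto_pi_nhds.mpr h)

def auxSup {Ω : Type} [MeasureSpace Ω] (Z : ℤ → Ω → ℝ) (s : Set ℤ) : MeasurableSpace Ω :=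
  ⨆ i ∈ s, MeasurableSpace.comap (Z i) Real.measurableSpace

theorem lem_D
    {Ω : Type} [MeasureSpace Ω] [IsProbabilityMeasure (ℙ : Measure Ω)]
    (Z : ℤ → Ω → ℝ) (ε : ℕ → Ω → ℝ)
    (hZmeas : ∀ i, Measurable (Z i)) (hεmeas : ∀ j, Measurable (ε j))
    (hZindep : iIndepFun Z ℙ)
    (hZident : ∀ i, Measure.map (Z i) ℙ = Measure.map (Z 0) ℙ)
    (hZcentered : (∫ ω, Z 0 ω ∂ℙ) = 0)
    (fZ : ℝ → ℝ)
    (hfZ : Measure.map (Z 0) ℙ = (volume : Measure ℝ).withDensity fun x => ENNReal.ofReal (fZ x))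
    (hεindep : iIndepFun ε ℙ)
    (hεident : ∀ j, Measure.map (ε j) ℙ = Measure.map (ε 1) ℙ)
    (fε : ℝ → ℝ)
    (hfε : Measure.map (ε 1) ℙ = (volume : Measure ℝ).withDensity fun x => ENNReal.ofReal (fε x))
    (hZεindep : IndepFun (fun ω i => Z i ω) (fun ω j => ε j ω) ℙ)
    (c : ℕ → ℝ) (hc0 : c 0 = 1)
    (X : ℕ → Ω → ℝ)
    (hX : ∀ (j : ℕ) (ω : Ω), HasSum (fun k : ℕ => c k * Z ((j : ℤ) - (k : ℤ)) ω) (X j ω))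
    (Y : ℕ → Ω → ℝ) (hYdef : ∀ j ω, Y j ω = X j ω + ε j ω)
    (f fY fεZ : ℝ → ℝ) (x₀ : ℝ)
    (hfX : Measure.map (X 1) ℙ = (volume : Measure ℝ).withDensity fun x => ENNReal.ofReal (f x))
    (hfYd : Measure.map (Y 1) ℙ = (volume : Measure ℝ).withDensity fun x => ENNReal.ofReal (fY x))
    (hfεZ : Measure.map (fun ω => ε 1 ω + Z 1 ω) ℙ
      = (volume : Measure ℝ).withDensity fun x => ENNReal.ofReal (fεZ x))
    (hfεZ_smooth : ContDiff ℝ 2 fεZ)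
    (hfεZ_bdd : ∃ M, ∀ x, |deriv fεZ x| ≤ M ∧ |iteratedDeriv 2 fεZ x| ≤ M)
    (hL2 : ∀ r : ℕ, r ≤ 2 → Integrable fun v => (iteratedDeriv r fεZ v) ^ 2)
    (κ : ℝ) (hκ : 0 < κ) (hmom : Integrable fun ω => |Y 1 ω| ^ κ)
    (FεZ FYd : ℝ → ℝ)
    (hFεZ : ∀ x, FεZ x = (ℙ {ω | ε 1 ω + Z 1 ω ≤ x}).toReal)
    (hFYd : ∀ x, FYd x = (ℙ {ω | Y 1 ω ≤ x}).toReal) :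
    ∀ r : ℕ, r ≤ 2 → ∀ y : ℝ,
      iteratedDeriv r FYd y = ∫ ω, iteratedDeriv r FεZ (y - (X 1 ω - Z 1 ω)) ∂ℙ := by
  intro r hr y
  by_cases hc1 : ∀ k : ℕ, k ≠ 0 → c k = 0
  · -- degenerate case : X 1 = Z 1
    have hXZ : ∀ ω, X 1 ω = Z 1 ω := by
      intro ω
      have h1 : HasSum (fun k : ℕ => c k * Z ((1 : ℤ) - (k : ℤ)) ω) (X 1 ω) := hX 1 ω
      have h2 : HasSum (fun k : ℕ => c k * Z ((1 : ℤ) - (k : ℤ)) ω) (Z 1 ω) := by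
        have hfe : (fun k : ℕ => c k * Z ((1 : ℤ) - (k : ℤ)) ω)
            = fun k : ℕ => if k = 0 then Z 1 ω else 0 := by
          funext k
          by_cases hk : k = 0
          · subst hk; simp [hc0]
          · simp [hk, hc1 k hk]
        rw [hfe]
        exact hasSum_ite_eq 0 (Z 1 ω)
      exact h1.unique h2
    have hFeq : FYd = FεZ := by
      funext x
      rw [hFYd, hFεZ]
      congr 2
      ext ω
      simp [hYdef, hXZ ω, add_comm]
    have hconst : ∀ ω, y - (X 1 ω - Z 1 ω) = y := by intro ω; rw [hXZ ω]; ring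
    simp only [hconst, hFeq]
    rw [integral_const]
    simp
  · push_neg at hc1
    obtain ⟨k₀, hk₀ne, hck₀⟩ := hc1
    -- notation
    set W : Ω → ℝ := fun ω => X 1 ω - Z 1 ω with hWdef
    set S : Ω → ℝ := fun ω => ε 1 ω + Z 1 ω with hSdef
    -- σ-algebras
    have hZcomap : ∀ i : ℤ, Measurable[MeasurableSpace.comap (Z i) Real.measurableSpace] (Z i) :=
      fun i => Measurable.of_comap_le le_rfl
    have hZmA : ∀ (s : Set ℤ) (i : ℤ), i ∈ s → Measurable[auxSup Z s] (Z i) := by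
      intro s i hi
      exact (hZcomap i).mono
        (le_biSup (fun i => MeasurableSpace.comap (Z i) Real.measurableSpace) hi) le_rfl
    -- W is mA-measurable
    have hWsum : ∀ ω, HasSum
        (fun k : ℕ => if k = 0 then 0 else c k * Z ((1:ℤ) - (k:ℤ)) ω) (W ω) := by
      intro ω
      have h1 := (hX 1 ω).update 0 0
      have h2 : (fun k : ℕ => if k = 0 then 0 else c k * Z ((1:ℤ) - (k:ℤ)) ω)
          = Function.update (fun k : ℕ => c k * Z ((1:ℤ) - (k:ℤ)) ω) 0 0 := by
        funext k
        rw [Function.update_apply]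
      rw [h2]
      convert h1 using 1
      · rfl
      · rfl
      simp [hc0, hWdef]
      ring
    have hterm : ∀ (s : Set ℤ) (bad : Set ℕ) [DecidablePred (· ∈ bad)],
        (∀ k : ℕ, k ∉ bad → (1:ℤ) - (k:ℤ) ∈ s) →
        ∀ k : ℕ, Measurable[auxSup Z s]
          (fun ω => if k ∈ bad then 0 else c k * Z ((1:ℤ) - (k:ℤ)) ω) := by
      intro s bad _ hbad k
      by_cases hk : k ∈ bad
      · simpa [hk] using (measurable_const : Measurable[auxSup Z s] (fun _ => (0:ℝ)))
      · simp only [hk, if_false]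
        exact measurable_const.mul (hZmA _ _ (hbad k hk))
    have hWmA : Measurable[auxSup Z (Set.Iic 0)] W := by
      have hmeasn : ∀ n : ℕ, Measurable[auxSup Z (Set.Iic 0)]
          (fun ω => ∑ k ∈ Finset.range n,
            (if k = 0 then 0 else c k * Z ((1:ℤ) - (k:ℤ)) ω)) := by
        intro n
        apply Finset.measurable_sum
        intro k _
        have := hterm (Set.Iic 0) {0} (fun k hk => by
          simp only [Set.mem_singleton_iff] at hk
          have : (1:ℤ) ≤ (k:ℤ) := by exact_mod_cast Nat.one_le_iff_ne_zero.mpr hk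
          simp only [Set.mem_Iic]
          omega) k
        simpa using this
      exact aux_measurable_limit (m := auxSup Z (Set.Iic 0)) hmeasn
        (fun ω => (hWsum ω).tendsto_sum_nat)
    have hmA_le : ∀ s : Set ℤ, auxSup Z s ≤ (inferInstance : MeasurableSpace Ω) :=
      fun s => iSup₂_le fun i _ => (hZmeas i).comap_le
    have hWmeas : Measurable W := hWmA.mono (hmA_le _) le_rfl
    have hSmeas : Measurable S := (hεmeas 1).add (hZmeas 1)
    -- independence of W and S
    have hiZ : iIndep (fun i => MeasurableSpace.comap (Z i) Real.measurableSpace) ℙ :=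
      hZindep.iIndep
    have hcomap_le : ∀ i, MeasurableSpace.comap (Z i) Real.measurableSpace
        ≤ (inferInstance : MeasurableSpace Ω) := fun i => (hZmeas i).comap_le
    have hIgen : ∀ s t : Set ℤ, Disjoint s t →
        Indep (auxSup Z s) (auxSup Z t) ℙ := by
      intro s t hd
      exact indep_iSup_of_disjoint hcomap_le hiZ hd
    have hsingle : ∀ i : ℤ, auxSup Z {i} = MeasurableSpace.comap (Z i) Real.measurableSpace := by
      intro i
      rw [auxSup]
      simp
    have I1 : Indep (auxSup Z (Set.Iic 0)) (MeasurableSpace.comap (Z 1) Real.measurableSpace)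
        ℙ := by
      rw [← hsingle 1]
      refine hIgen _ _ ?_
      rw [Set.disjoint_singleton_right]
      simp
    have hsupZ_le : ∀ s : Set ℤ, auxSup Z s
        ≤ ⨆ i, MeasurableSpace.comap (Z i) Real.measurableSpace :=
      fun s => iSup₂_le fun i _ =>
        le_iSup (fun i => MeasurableSpace.comap (Z i) Real.measurableSpace) i
    have I2 : Indep (⨆ i, MeasurableSpace.comap (Z i) Real.measurableSpace)
        (MeasurableSpace.comap (ε 1) Real.measurableSpace) ℙ := by
      have hZε : Indep (MeasurableSpace.comap (fun ω i => Z i ω) MeasurableSpace.pi)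
          (MeasurableSpace.comap (fun ω j => ε j ω) MeasurableSpace.pi) ℙ :=
        (IndepFun_iff_Indep _ _ _).mp hZεindep
      have hle1 : (⨆ i, MeasurableSpace.comap (Z i) Real.measurableSpace)
          ≤ MeasurableSpace.comap (fun ω i => Z i ω) MeasurableSpace.pi := by
        refine iSup_le fun i => ?_
        have h0 : Z i = (fun g : ℤ → ℝ => g i) ∘ (fun ω i => Z i ω) := rfl
        rw [h0, ← MeasurableSpace.comap_comp]
        exact MeasurableSpace.comap_mono (measurable_pi_apply i).comap_le
      have hle2 : MeasurableSpace.comap (ε 1) Real.measurableSpace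
          ≤ MeasurableSpace.comap (fun ω j => ε j ω) MeasurableSpace.pi := by
        have h0 : ε 1 = (fun g : ℕ → ℝ => g 1) ∘ (fun ω j => ε j ω) := rfl
        rw [h0, ← MeasurableSpace.comap_comp]
        exact MeasurableSpace.comap_mono (measurable_pi_apply 1).comap_le
      exact indep_of_indep_of_le_right (indep_of_indep_of_le_left hZε hle1) hle2
    have I2' : Indep (auxSup Z (Set.Iic 0) ⊔ MeasurableSpace.comap (Z 1) Real.measurableSpace)
        (MeasurableSpace.comap (ε 1) Real.measurableSpace) ℙ :=
      indep_of_indep_of_le_left I2 (sup_le (hsupZ_le _)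
        (le_iSup (fun i => MeasurableSpace.comap (Z i) Real.measurableSpace) 1))
    have comb : Indep (auxSup Z (Set.Iic 0)) (MeasurableSpace.comap (Z 1) Real.measurableSpace
        ⊔ MeasurableSpace.comap (ε 1) Real.measurableSpace) ℙ :=
      aux_indep_sup (hmA_le _) ((hZmeas 1).comap_le) ((hεmeas 1).comap_le) I1 I2'
    have hS23 : Measurable[MeasurableSpace.comap (Z 1) Real.measurableSpace
        ⊔ MeasurableSpace.comap (ε 1) Real.measurableSpace] S := by
      apply Measurable.add
      · exact (Measurable.of_comap_le le_rfl : Measurable[MeasurableSpace.comap (ε 1)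
          Real.measurableSpace] (ε 1)).mono le_sup_right le_rfl
      · exact (hZcomap 1).mono le_sup_left le_rfl
    have hWS : IndepFun W S ℙ := by
      rw [IndepFun_iff_Indep]
      exact indep_of_indep_of_le_right (indep_of_indep_of_le_left comb hWmA.comap_le)
        hS23.comap_le
    -- CDF facts
    have hprobS : IsProbabilityMeasure (Measure.map S ℙ) :=
      Measure.isProbabilityMeasure_map hSmeas.aemeasurable
    have hFεZ' : ∀ x, FεZ x = ((Measure.map S ℙ) (Set.Iic x)).toReal := by
      intro x
      rw [hFεZ x, Measure.map_apply hSmeas measurableSet_Iic]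
      rfl
    have hFεZmono : Monotone FεZ := by
      intro a b hab
      rw [hFεZ' a, hFεZ' b]
      exact ENNReal.toReal_mono (measure_ne_top _ _) (measure_mono (Set.Iic_subset_Iic.mpr hab))
    have hFεZ01 : ∀ x, 0 ≤ FεZ x ∧ FεZ x ≤ 1 := by
      intro x
      constructor
      · rw [hFεZ' x]; exact ENNReal.toReal_nonneg
      · rw [hFεZ' x]
        have h1 : (Measure.map S ℙ) (Set.Iic x) ≤ 1 := prob_le_one
        calc ((Measure.map S ℙ) (Set.Iic x)).toReal ≤ (1 : ENNReal).toReal :=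
              ENNReal.toReal_mono ENNReal.one_ne_top h1
          _ = 1 := by simp
    have hWSsum : ∀ ω, W ω + S ω = Y 1 ω := by
      intro ω
      rw [hYdef]
      simp only [hWdef, hSdef]
      ring
    have hK : ∀ t : ℝ, FYd t = ∫ ω, FεZ (t - W ω) ∂ℙ := by
      intro t
      have hpair : Measure.map (fun ω => (W ω, S ω)) ℙ
          = (Measure.map W ℙ).prod (Measure.map S ℙ) :=
        (indepFun_iff_map_prod_eq_prod_map_map hWmeas.aemeasurable hSmeas.aemeasurable).mp hWS
      have hYWS : {ω | Y 1 ω ≤ t} = (fun ω => (W ω, S ω)) ⁻¹' {q : ℝ × ℝ | q.1 + q.2 ≤ t} := by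
        ext ω
        simp only [Set.mem_setOf_eq, Set.mem_preimage]
        rw [← hWSsum ω]
      have hqmeas : MeasurableSet {q : ℝ × ℝ | q.1 + q.2 ≤ t} :=
        measurableSet_le (measurable_fst.add measurable_snd) measurable_const
      have h1 : ℙ {ω | Y 1 ω ≤ t}
          = ((Measure.map W ℙ).prod (Measure.map S ℙ)) {q : ℝ × ℝ | q.1 + q.2 ≤ t} := by
        rw [hYWS, ← hpair, Measure.map_apply (hWmeas.prodMk hSmeas) hqmeas]
      have hslice : ∀ w : ℝ, (Prod.mk w ⁻¹' {q : ℝ × ℝ | q.1 + q.2 ≤ t}) = Set.Iic (t - w) := by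
        intro w
        ext s'
        simp only [Set.mem_preimage, Set.mem_setOf_eq, Set.mem_Iic]
        constructor <;> intro h <;> linarith
      have h2 : ((Measure.map W ℙ).prod (Measure.map S ℙ)) {q : ℝ × ℝ | q.1 + q.2 ≤ t}
          = ∫⁻ w, (Measure.map S ℙ) (Set.Iic (t - w)) ∂(Measure.map W ℙ) := by
        rw [Measure.prod_apply hqmeas]
        congr 1
        funext w
        rw [hslice w]
      have hmeasw : Measurable fun w => (Measure.map S ℙ) (Set.Iic (t - w)) := by
        have hmono : Monotone fun u => (Measure.map S ℙ) (Set.Iic u) :=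
          fun a b hab => measure_mono (Set.Iic_subset_Iic.mpr hab)
        exact hmono.measurable.comp (measurable_const.sub measurable_id)
      have h3 : ∫ ω, FεZ (t - W ω) ∂ℙ = ∫ w, FεZ (t - w) ∂(Measure.map W ℙ) := by
        have hm1 : AEStronglyMeasurable (fun w : ℝ => FεZ (t - w)) (Measure.map W ℙ) := by
          have hm0 : Measurable fun w : ℝ => FεZ (t - w) :=
            hFεZmono.measurable.comp (measurable_const.sub measurable_id)
          exact hm0.aestronglyMeasurable
        rw [integral_map hWmeas.aemeasurable hm1]
      have h4 : ∫ w, FεZ (t - w) ∂(Measure.map W ℙ)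
          = (∫⁻ w, (Measure.map S ℙ) (Set.Iic (t - w)) ∂(Measure.map W ℙ)).toReal := by
        rw [show (fun w => FεZ (t - w))
            = fun w => ((Measure.map S ℙ) (Set.Iic (t - w))).toReal from
          funext fun w => hFεZ' _]
        exact integral_toReal hmeasw.aemeasurable (ae_of_all _ fun w => measure_lt_top _ _)
      rw [hFYd t, h1, h2, h3, h4]
    -- density facts for the positive part p of fεZ
    set p : ℝ → ℝ := fun t => max (fεZ t) 0 with hpdef
    obtain ⟨M, hM⟩ := hfεZ_bdd
    have hM0 : 0 ≤ M := le_trans (abs_nonneg _) (hM 0).1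
    have hfdiff : Differentiable ℝ fεZ := hfεZ_smooth.differentiable (by norm_num)
    have hflip : LipschitzWith (Real.toNNReal M) fεZ := by
      apply lipschitzWith_of_nnnorm_deriv_le hfdiff
      intro x
      rw [← NNReal.coe_le_coe, coe_nnnorm, Real.coe_toNNReal M hM0, Real.norm_eq_abs]
      exact (hM x).1
    have hplip : LipschitzWith (Real.toNNReal M) p := hflip.max_const 0
    have hpcont : Continuous p := hplip.continuous
    have hpnn : ∀ t, 0 ≤ p t := fun t => le_max_right _ _
    have hofReal : ∀ t, ENNReal.ofReal (fεZ t) = ENNReal.ofReal (p t) := by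
      intro t
      rcases le_total 0 (fεZ t) with h | h
      · rw [hpdef]
        simp only [max_eq_left h]
      · rw [hpdef]
        simp only [max_eq_right h]
        rw [ENNReal.ofReal_of_nonpos h, ENNReal.ofReal_zero]
    have hμSd : ∀ s : Set ℝ, MeasurableSet s →
        (Measure.map S ℙ) s = ∫⁻ t in s, ENNReal.ofReal (p t) ∂volume := by
      intro s hs
      rw [hfεZ, withDensity_apply _ hs]
      exact lintegral_congr fun t => hofReal t
    have hlint1 : ∫⁻ t, ENNReal.ofReal (p t) ∂volume = 1 := by
      have h0 := hμSd Set.univ MeasurableSet.univ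
      rw [measure_univ, Measure.restrict_univ] at h0
      exact h0.symm
    have hpint : Integrable p volume := by
      refine ⟨hpcont.aestronglyMeasurable, ?_⟩
      rw [hasFiniteIntegral_iff_norm]
      have h0 : ∀ t, ENNReal.ofReal ‖p t‖ = ENNReal.ofReal (p t) := by
        intro t
        rw [Real.norm_of_nonneg (hpnn t)]
      rw [lintegral_congr h0, hlint1]
      exact ENNReal.one_lt_top
    have hμS_toReal : ∀ s : Set ℝ, MeasurableSet s →
        ((Measure.map S ℙ) s).toReal = ∫ t in s, p t ∂volume := by
      intro s hs
      rw [hμSd s hs,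
        integral_eq_lintegral_of_nonneg_ae (ae_of_all _ fun t => hpnn t)
          hpcont.aestronglyMeasurable.restrict]
    have hFεZp : ∀ x, FεZ x = ∫ t in Set.Iic x, p t ∂volume := fun x => by
      rw [hFεZ' x, hμS_toReal _ measurableSet_Iic]
    have hFTC : ∀ x, HasDerivAt FεZ (p x) x := by
      intro x
      have hkey : ∀ u : ℝ, FεZ u = FεZ 0 + ∫ t in (0:ℝ)..u, p t := by
        intro u
        rw [hFεZp u, hFεZp 0]
        have := intervalIntegral.integral_Iic_sub_Iic (hpint.integrableOn) (hpint.integrableOn)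
          (a := (0:ℝ)) (b := u) (μ := volume)
        linarith
      have h1 : HasDerivAt (fun u => FεZ 0 + ∫ t in (0:ℝ)..u, p t) (p x) x :=
        ((hpcont.integral_hasStrictDerivAt 0 x).hasDerivAt).const_add (FεZ 0)
      have h2 : FεZ = fun u => FεZ 0 + ∫ t in (0:ℝ)..u, p t := funext hkey
      rw [h2]
      exact h1
    have hderivFεZ : deriv FεZ = p := funext fun x => (hFTC x).deriv
    -- bound on p
    have hpbdd : ∀ x, p x ≤ M + 1 := by
      intro x
      by_contra hlt
      push_neg at hlt
      have hlow : ∀ t ∈ Set.Ioc x (x + 1), p x - M ≤ p t := by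
        intro t ht
        have hd := hplip.dist_le_mul t x
        rw [Real.dist_eq, Real.dist_eq, Real.coe_toNNReal M hM0] at hd
        have h1 : |t - x| ≤ 1 := by
          rw [abs_of_pos (by linarith [ht.1])]
          linarith [ht.2]
        have h2 : |p t - p x| ≤ M := by
          calc |p t - p x| ≤ M * |t - x| := hd
            _ ≤ M * 1 := by nlinarith
            _ = M := mul_one M
        have := abs_le.mp h2
        linarith [this.1]
      have h2 : p x - M ≤ ∫ t in Set.Ioc x (x + 1), p t ∂volume := by
        have hconst : ∫ _ in Set.Ioc x (x + 1), (p x - M) ∂volume = p x - M := by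
          rw [setIntegral_const]
          rw [Real.volume_real_Ioc]
          norm_num
        rw [← hconst]
        exact setIntegral_mono_on
          (integrableOn_const (by
            rw [Real.volume_Ioc]
            exact ENNReal.ofReal_ne_top))
          hpint.integrableOn measurableSet_Ioc hlow
      have h3 : ∫ t in Set.Ioc x (x + 1), p t ∂volume ≤ ∫ t, p t ∂volume :=
        setIntegral_le_integral hpint (ae_of_all _ hpnn)
      have h4 : ∫ t, p t ∂volume = 1 := by
        rw [integral_eq_lintegral_of_nonneg_ae (ae_of_all _ fun t => hpnn t)
          hpcont.aestronglyMeasurable, hlint1]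
        simp
      linarith
    -- the law of W is atomless
    have hUsum : ∀ ω, HasSum
        (fun k : ℕ => if k = 0 ∨ k = k₀ then 0 else c k * Z ((1:ℤ) - (k:ℤ)) ω)
        (W ω - c k₀ * Z ((1:ℤ) - (k₀:ℤ)) ω) := by
      intro ω
      have h1 := ((hX 1 ω).update 0 0).update k₀ 0
      have h2 : (fun k : ℕ => if k = 0 ∨ k = k₀ then 0 else c k * Z ((1:ℤ) - (k:ℤ)) ω)
          = Function.update (Function.update
              (fun k : ℕ => c k * Z ((1:ℤ) - (k:ℤ)) ω) 0 0) k₀ 0 := by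
        funext k
        rw [Function.update_apply, Function.update_apply]
        by_cases hk : k = k₀
        · simp [hk]
        · by_cases hk0 : k = 0 <;> simp [hk, hk0]
      rw [h2]
      convert h1 using 1
      · rfl
      · rfl
      rw [Function.update_of_ne hk₀ne]
      simp only [hWdef, hc0, one_mul, Nat.cast_zero, sub_zero]
      ring
    have hUmU : Measurable[auxSup Z (Set.Iic 0 \ {(1:ℤ) - (k₀:ℤ)})]
        (fun ω => W ω - c k₀ * Z ((1:ℤ) - (k₀:ℤ)) ω) := by
      have hmeasn : ∀ n : ℕ, Measurable[auxSup Z (Set.Iic 0 \ {(1:ℤ) - (k₀:ℤ)})]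
          (fun ω => ∑ k ∈ Finset.range n,
            (if k = 0 ∨ k = k₀ then 0 else c k * Z ((1:ℤ) - (k:ℤ)) ω)) := by
        intro n
        apply Finset.measurable_sum
        intro k _
        by_cases hk : k = 0 ∨ k = k₀
        · simpa [hk] using (measurable_const :
            Measurable[auxSup Z (Set.Iic 0 \ {(1:ℤ) - (k₀:ℤ)})] (fun _ => (0:ℝ)))
        · push_neg at hk
          simp only [hk, if_false, hk.1, hk.2, or_self]
          refine measurable_const.mul (hZmA _ _ ?_)
          constructor
          · have : (1:ℤ) ≤ (k:ℤ) := by exact_mod_cast Nat.one_le_iff_ne_zero.mpr hk.1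
            simp only [Set.mem_Iic]
            omega
          · simp only [Set.mem_singleton_iff]
            intro hcontra
            apply hk.2
            have : (k:ℤ) = (k₀:ℤ) := by omega
            exact_mod_cast this
      exact aux_measurable_limit (m := auxSup Z (Set.Iic 0 \ {(1:ℤ) - (k₀:ℤ)})) hmeasn
        (fun ω => (hUsum ω).tendsto_sum_nat)
    have hUmeas : Measurable (fun ω => W ω - c k₀ * Z ((1:ℤ) - (k₀:ℤ)) ω) :=
      hUmU.mono (hmA_le _) le_rfl
    have hIUV : IndepFun (fun ω => W ω - c k₀ * Z ((1:ℤ) - (k₀:ℤ)) ω)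
        (Z ((1:ℤ) - (k₀:ℤ))) ℙ := by
      rw [IndepFun_iff_Indep]
      have hd : Disjoint (Set.Iic 0 \ {(1:ℤ) - (k₀:ℤ)}) {(1:ℤ) - (k₀:ℤ)} :=
        Set.disjoint_singleton_right.mpr (fun h => h.2 rfl)
      have hI := hIgen _ _ hd
      rw [hsingle ((1:ℤ) - (k₀:ℤ))] at hI
      exact indep_of_indep_of_le_left hI hUmU.comap_le
    have hatomZ : ∀ a : ℝ, (Measure.map (Z ((1:ℤ) - (k₀:ℤ))) ℙ) {a} = 0 := by
      intro a
      rw [hZident, hfZ]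
      exact (withDensity_absolutelyContinuous volume _) (by simp)
    have hWatom : ∀ a : ℝ, (Measure.map W ℙ) {a} = 0 := by
      intro a
      rw [Measure.map_apply hWmeas (measurableSet_singleton a)]
      have hpair2 : Measure.map
            (fun ω => ((fun ω => W ω - c k₀ * Z ((1:ℤ) - (k₀:ℤ)) ω) ω,
              Z ((1:ℤ) - (k₀:ℤ)) ω)) ℙ
          = (Measure.map (fun ω => W ω - c k₀ * Z ((1:ℤ) - (k₀:ℤ)) ω) ℙ).prod
              (Measure.map (Z ((1:ℤ) - (k₀:ℤ))) ℙ) :=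
        (indepFun_iff_map_prod_eq_prod_map_map hUmeas.aemeasurable
          (hZmeas _).aemeasurable).mp hIUV
      have hqm : MeasurableSet {q : ℝ × ℝ | q.1 + c k₀ * q.2 = a} :=
        measurableSet_eq_fun (measurable_fst.add (measurable_const.mul measurable_snd))
          measurable_const
      have hset : W ⁻¹' {a} = (fun ω => ((fun ω => W ω - c k₀ * Z ((1:ℤ) - (k₀:ℤ)) ω) ω,
          Z ((1:ℤ) - (k₀:ℤ)) ω)) ⁻¹' {q : ℝ × ℝ | q.1 + c k₀ * q.2 = a} := by
        ext ω
        simp only [Set.mem_preimage, Set.mem_singleton_iff, Set.mem_setOf_eq]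
        constructor <;> intro h <;> linarith
      rw [hset, ← Measure.map_apply (hUmeas.prodMk (hZmeas _)) hqm, hpair2,
        Measure.prod_apply hqm]
      have hzero : ∀ u : ℝ, (Measure.map (Z ((1:ℤ) - (k₀:ℤ))) ℙ)
          (Prod.mk u ⁻¹' {q : ℝ × ℝ | q.1 + c k₀ * q.2 = a}) = 0 := by
        intro u
        have hsl : (Prod.mk u ⁻¹' {q : ℝ × ℝ | q.1 + c k₀ * q.2 = a})
            = {(a - u) / c k₀} := by
          ext v
          rw [Set.mem_preimage, Set.mem_setOf_eq, Set.mem_singleton_iff,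
            eq_div_iff hck₀]
          constructor <;> intro h <;> linarith
        rw [hsl]
        exact hatomZ _
      rw [lintegral_congr hzero]
      simp
    have hWnull : ∀ E : Set ℝ, E.Countable → ℙ (W ⁻¹' E) = 0 := by
      intro E hE
      rw [← Measure.map_apply hWmeas hE.measurableSet]
      haveI : MeasureTheory.NullSingletonClass (Measure.map W ℙ) := ⟨hWatom⟩
      exact hE.measure_zero _
    -- differentiability of p away from a countable kink set
    have hDcnt : {x : ℝ | fεZ x = 0 ∧ deriv fεZ x ≠ 0}.Countable := aux_countable_kinks hfdiff
    have hpdiff : ∀ x : ℝ, ¬(fεZ x = 0 ∧ deriv fεZ x ≠ 0) → DifferentiableAt ℝ p x :=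
      fun x hx => aux_posPart_diff hfdiff hx
    -- translations are 1-Lipschitz
    have htrans : ∀ a : ℝ, LipschitzWith 1 (fun x : ℝ => x - a) := by
      intro a
      apply LipschitzWith.of_dist_le_mul
      intro x y
      simp [Real.dist_eq, sub_sub_sub_cancel_right]
    -- integrability of bounded measurable functions
    have hint_bdd : ∀ (g : Ω → ℝ) (C : ℝ), Measurable g → (∀ ω, |g ω| ≤ C) →
        Integrable g ℙ := by
      intro g C hg hC
      exact Integrable.mono' (integrable_const C) hg.aestronglyMeasurable
        (ae_of_all _ (by simpa [Real.norm_eq_abs] using hC))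
    -- FεZ is Lipschitz
    have hFlip : LipschitzWith (Real.toNNReal (M + 1)) FεZ := by
      apply lipschitzWith_of_nnnorm_deriv_le (fun x => (hFTC x).differentiableAt)
      intro x
      rw [← NNReal.coe_le_coe, coe_nnnorm, Real.coe_toNNReal _ (by linarith : (0:ℝ) ≤ M + 1),
        (hFTC x).deriv, Real.norm_eq_abs, abs_of_nonneg (hpnn x)]
      exact hpbdd x
    -- first derivative of FYd
    have hD1 : ∀ t : ℝ, HasDerivAt FYd (∫ ω, p (t - W ω) ∂ℙ) t := by
      intro t
      have hFmeas : ∀ x : ℝ, AEStronglyMeasurable (fun ω => FεZ (x - W ω)) ℙ :=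
        fun x => (hFεZmono.measurable.comp (measurable_const.sub hWmeas)).aestronglyMeasurable
      have hFint : Integrable (fun ω => FεZ (t - W ω)) ℙ :=
        hint_bdd _ 1 (hFεZmono.measurable.comp (measurable_const.sub hWmeas))
          (fun ω => abs_le.mpr ⟨by linarith [(hFεZ01 (t - W ω)).1], (hFεZ01 (t - W ω)).2⟩)
      have hF'meas : AEStronglyMeasurable (fun ω => p (t - W ω)) ℙ :=
        (hpcont.measurable.comp (measurable_const.sub hWmeas)).aestronglyMeasurable
      have hlips : ∀ᵐ ω ∂ℙ, LipschitzOnWith (Real.nnabs (M + 1))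
          (fun x => FεZ (x - W ω)) (Metric.ball t 1) := by
        apply ae_of_all
        intro ω
        have hl1 : LipschitzWith (Real.toNNReal (M + 1)) (fun x : ℝ => FεZ (x - W ω)) := by
          have := hFlip.comp (htrans (W ω))
          simpa [Function.comp_def] using this
        rw [Real.nnabs_of_nonneg (by linarith : (0:ℝ) ≤ M + 1)]
        exact hl1.lipschitzOnWith
      have hdiff : ∀ᵐ ω ∂ℙ, HasDerivAt (fun x => FεZ (x - W ω)) (p (t - W ω)) t := by
        apply ae_of_all
        intro ω
        have h1 := (hFTC (t - W ω)).comp t ((hasDerivAt_id t).sub_const (W ω))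
        simpa [Function.comp_def] using h1
      have key := hasDerivAt_integral_of_dominated_loc_of_lip (μ := ℙ)
        (bound := fun _ => M + 1) (Metric.ball_mem_nhds _ one_pos)
        (Filter.Eventually.of_forall (fun x => hFmeas x)) hFint hF'meas hlips
        (integrable_const _) hdiff
      have hFYdeq : FYd = fun x => ∫ ω, FεZ (x - W ω) ∂ℙ := funext hK
      rw [hFYdeq]
      exact key.2
    -- second derivative
    have hD2 : HasDerivAt (fun t => ∫ ω, p (t - W ω) ∂ℙ)
        (∫ ω, deriv p (y - W ω) ∂ℙ) y := by
      have hFmeas : ∀ x : ℝ, AEStronglyMeasurable (fun ω => p (x - W ω)) ℙ :=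
        fun x => (hpcont.measurable.comp (measurable_const.sub hWmeas)).aestronglyMeasurable
      have hFint : Integrable (fun ω => p (y - W ω)) ℙ :=
        hint_bdd _ (M + 1) (hpcont.measurable.comp (measurable_const.sub hWmeas))
          (fun ω => by
            rw [abs_of_nonneg (hpnn _)]
            exact hpbdd _)
      have hF'meas : AEStronglyMeasurable (fun ω => deriv p (y - W ω)) ℙ :=
        ((measurable_deriv p).comp (measurable_const.sub hWmeas)).aestronglyMeasurable
      have hlips : ∀ᵐ ω ∂ℙ, LipschitzOnWith (Real.nnabs M)
          (fun x => p (x - W ω)) (Metric.ball y 1) := by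
        apply ae_of_all
        intro ω
        have hl1 : LipschitzWith (Real.toNNReal M) (fun x : ℝ => p (x - W ω)) := by
          have := hplip.comp (htrans (W ω))
          simpa [Function.comp_def] using this
        rw [Real.nnabs_of_nonneg hM0]
        exact hl1.lipschitzOnWith
      have hae : ∀ᵐ ω ∂ℙ,
          ω ∉ W ⁻¹' ((fun d => y - d) '' {x : ℝ | fεZ x = 0 ∧ deriv fεZ x ≠ 0}) := by
        rw [ae_iff]
        have hnull := hWnull _ (hDcnt.image (fun d => y - d))
        simp only [not_not]
        exact hnull
      have hdiff : ∀ᵐ ω ∂ℙ,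
          HasDerivAt (fun x => p (x - W ω)) (deriv p (y - W ω)) y := by
        filter_upwards [hae] with ω hω
        have hnk : ¬(fεZ (y - W ω) = 0 ∧ deriv fεZ (y - W ω) ≠ 0) := by
          intro hmem
          exact hω ⟨y - W ω, hmem, by show y - (y - W ω) = W ω; ring⟩
        have h1 := ((hpdiff _ hnk).hasDerivAt).comp y ((hasDerivAt_id y).sub_const (W ω))
        simpa [Function.comp_def] using h1
      have key := hasDerivAt_integral_of_dominated_loc_of_lip (μ := ℙ)
        (bound := fun _ => M) (Metric.ball_mem_nhds _ one_pos)
        (Filter.Eventually.of_forall (fun x => hFmeas x)) hFint hF'meas hlips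
        (integrable_const _) hdiff
      exact key.2
    -- assembly
    interval_cases r
    · simp only [iteratedDeriv_zero]
      exact hK y
    · simp only [iteratedDeriv_one, hderivFεZ]
      exact (hD1 y).deriv
    · have hder1 : deriv FYd = fun t => ∫ ω, p (t - W ω) ∂ℙ := funext fun t => (hD1 t).deriv
      rw [show (2:ℕ) = 1 + 1 from rfl, iteratedDeriv_succ, iteratedDeriv_one, hder1, hD2.deriv]
      congr 1
      funext ω
      rw [iteratedDeriv_succ, iteratedDeriv_one, hderivFεZ]
end
end

section
/- (Lemma E.) Let k ≥ 1 be an integer and r ≥ 0. Let ε and Z be independent real random variables such that Z has a density f_Z that is r times continuously differentiable with bounded derivatives and ∫ |f_Z^{(r)}(v)|^k dv < ∞. Then ε + Z has a density f_{ε+Z} that is r times differentiable with f_{ε+Z}^{(r)}(v) = E[f_Z^{(r)}(v − ε)], and ∫ |f_{ε+Z}^{(r)}(v)|^k dv < ∞. -/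
open MeasureTheory ProbabilityTheory Filter Asymptotics
open scoped Real Topology NNReal ProbabilityTheory ENNReal

noncomputable section

-- Auxiliary lemma: Part 1 (density of the sum of independent random variables)
theorem lem_E_part1
    {Ω : Type} [MeasureSpace Ω] [IsProbabilityMeasure (ℙ : Measure Ω)]
    (ε Z : Ω → ℝ) (hεmeas : Measurable ε) (hZmeas : Measurable Z)
    (hindep : IndepFun ε Z ℙ)
    (fZ : ℝ → ℝ) (hfZmeas : Measurable fZ) (hfZnn : ∀ x, 0 ≤ fZ x)
    (hfZ : Measure.map Z ℙ = (volume : Measure ℝ).withDensity fun x => ENNReal.ofReal (fZ x))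
    (hint : ∀ v : ℝ, Integrable (fun ω => fZ (v - ε ω)) ℙ) :
    Measure.map (fun ω => ε ω + Z ω) ℙ
      = (volume : Measure ℝ).withDensity fun v => ENNReal.ofReal (∫ ω, fZ (v - ε ω) ∂ℙ) := by
  set g : ℝ → ℝ≥0∞ := fun x => ENNReal.ofReal (fZ x) with hg
  have hgmeas : Measurable g := hfZmeas.ennreal_ofReal
  set μ : Measure ℝ := Measure.map ε ℙ with hμ
  have hμprob : IsProbabilityMeasure μ := Measure.isProbabilityMeasure_map hεmeas.aemeasurable
  -- the key pointwise identity
  have hkey : ∀ v : ℝ, ENNReal.ofReal (∫ ω, fZ (v - ε ω) ∂ℙ) = ∫⁻ x, g (v - x) ∂μ := by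
    intro v
    rw [ofReal_integral_eq_lintegral_ofReal (hint v) (ae_of_all _ fun ω => hfZnn _)]
    exact (lintegral_map (hgmeas.comp (measurable_const.sub measurable_id)) hεmeas).symm
  -- sum as map of product
  have hpair : Measure.map (fun ω => (ε ω, Z ω)) ℙ = μ.prod (Measure.map Z ℙ) :=
    (indepFun_iff_map_prod_eq_prod_map_map hεmeas.aemeasurable hZmeas.aemeasurable).mp hindep
  have hmap : Measure.map (fun ω => ε ω + Z ω) ℙ
      = Measure.map (fun p : ℝ × ℝ => p.1 + p.2) (μ.prod (Measure.map Z ℙ)) := by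
    rw [← hpair, Measure.map_map measurable_add (hεmeas.prodMk hZmeas)]
    rfl
  rw [hmap, hfZ]
  refine Measure.ext fun s hs => ?_
  rw [Measure.map_apply measurable_add hs,
    Measure.prod_apply (measurable_add hs)]
  have hstep : ∀ x : ℝ,
      ((volume : Measure ℝ).withDensity g) (Prod.mk x ⁻¹' ((fun p : ℝ × ℝ => p.1 + p.2) ⁻¹' s))
        = ∫⁻ v, s.indicator (fun v => g (v - x)) v := by
    intro x
    have hset : MeasurableSet {y : ℝ | x + y ∈ s} := (hs.preimage (measurable_const_add x))
    have : Prod.mk x ⁻¹' ((fun p : ℝ × ℝ => p.1 + p.2) ⁻¹' s) = {y : ℝ | x + y ∈ s} := rfl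
    rw [this, withDensity_apply _ hset, ← lintegral_indicator hset]
    rw [← lintegral_add_left_eq_self (fun v => s.indicator (fun v => g (v - x)) v) x]
    congr 1
    funext y
    by_cases hy : x + y ∈ s <;> simp [Set.indicator_apply, hy]
  simp_rw [hstep]
  rw [lintegral_lintegral_swap]
  · rw [withDensity_apply _ hs, ← lintegral_indicator hs]
    congr 1
    funext v
    by_cases hv : v ∈ s
    · simp only [Set.indicator_of_mem hv, hkey]
    · simp [Set.indicator_of_notMem hv]
  · apply Measurable.aemeasurable
    apply Measurable.indicator
    · exact hgmeas.comp (measurable_snd.sub measurable_fst)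
    · exact (hs.preimage measurable_snd)

-- Auxiliary lemma: Part 2 (differentiation under the integral sign)
theorem lem_E_part2
    {Ω : Type} [MeasureSpace Ω] [IsProbabilityMeasure (ℙ : Measure Ω)]
    (ε : Ω → ℝ) (hεmeas : Measurable ε)
    (fZ : ℝ → ℝ)
    (r : ℕ)
    (hsmooth : ContDiff ℝ r fZ)
    (hbdd : ∀ j : ℕ, j ≤ r → ∃ M, ∀ x, |iteratedDeriv j fZ x| ≤ M)
    (hint : ∀ (h : ℝ → ℝ), Measurable h → (∃ M, ∀ x, |h x| ≤ M) →
      ∀ v : ℝ, Integrable (fun ω => h (v - ε ω)) ℙ) :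
    ∀ j : ℕ, j ≤ r → ∀ v : ℝ,
      iteratedDeriv j (fun w => ∫ ω, fZ (w - ε ω) ∂ℙ) v
        = ∫ ω, iteratedDeriv j fZ (v - ε ω) ∂ℙ := by
  intro j
  induction j with
  | zero => intro _ v; simp
  | succ j ih =>
    intro hj v
    have hj' : j ≤ r := Nat.le_of_succ_le hj
    have hjr : (j : WithTop ℕ∞) < r := by exact_mod_cast Nat.lt_of_succ_le hj
    have hmeasj : Measurable (iteratedDeriv j fZ) :=
      (hsmooth.continuous_iteratedDeriv j (by exact_mod_cast hj')).measurable
    have hmeasj1 : Measurable (iteratedDeriv (j+1) fZ) :=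
      (hsmooth.continuous_iteratedDeriv (j+1) (by exact_mod_cast hj)).measurable
    have hdiffj : Differentiable ℝ (iteratedDeriv j fZ) :=
      hsmooth.differentiable_iteratedDeriv j hjr
    rw [iteratedDeriv_succ]
    have hfun : iteratedDeriv j (fun w => ∫ ω, fZ (w - ε ω) ∂ℙ)
        = fun v => ∫ ω, iteratedDeriv j fZ (v - ε ω) ∂ℙ := funext (ih hj')
    rw [hfun]
    obtain ⟨M, hM⟩ := hbdd (j+1) hj
    have key := hasDerivAt_integral_of_dominated_loc_of_deriv_le
      (μ := ℙ) (x₀ := v)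
      (F := fun x ω => iteratedDeriv j fZ (x - ε ω))
      (F' := fun x ω => iteratedDeriv (j+1) fZ (x - ε ω))
      (bound := fun _ => M) (Metric.ball_mem_nhds v one_pos)
      (Eventually.of_forall fun x =>
        (hmeasj.comp (measurable_const.sub hεmeas)).aestronglyMeasurable)
      (hint _ hmeasj (hbdd j hj') v)
      ((hmeasj1.comp (measurable_const.sub hεmeas)).aestronglyMeasurable)
      (ae_of_all _ fun ω x _ => by simpa using hM (x - ε ω))
      (integrable_const M)
      (ae_of_all _ fun ω x _ => ?_)
    · exact key.2.deriv
    · have h1 : HasDerivAt (iteratedDeriv j fZ)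
          (iteratedDeriv (j+1) fZ (x - ε ω)) (x - ε ω) := by
        rw [iteratedDeriv_succ]
        exact (hdiffj (x - ε ω)).hasDerivAt
      simpa [Function.comp_def] using h1.comp x ((hasDerivAt_id x).sub_const (ε ω))

-- Auxiliary lemma: Part 3 (Lᵏ bound via Jensen's inequality)
theorem lem_E_part3
    {Ω : Type} [MeasureSpace Ω] [IsProbabilityMeasure (ℙ : Measure Ω)]
    (ε : Ω → ℝ) (hεmeas : Measurable ε)
    (g : ℝ → ℝ) (hgcont : Continuous g)
    (M : ℝ) (hM : ∀ x, |g x| ≤ M)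
    (k : ℕ)
    (hLk : Integrable fun v : ℝ => |g v| ^ k)
    (hint : ∀ (h : ℝ → ℝ), Measurable h → (∃ M, ∀ x, |h x| ≤ M) →
      ∀ v : ℝ, Integrable (fun ω => h (v - ε ω)) ℙ) :
    Integrable fun v : ℝ => |∫ ω, g (v - ε ω) ∂ℙ| ^ k := by
  have hgmeas : Measurable g := hgcont.measurable
  -- continuity of the averaged function
  have hGcont : Continuous fun v : ℝ => ∫ ω, g (v - ε ω) ∂ℙ := by
    rw [continuous_iff_continuousAt]
    intro v₀
    refine tendsto_integral_filter_of_dominated_convergence (fun _ => M)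
      (Eventually.of_forall fun v =>
        (hgmeas.comp (measurable_const.sub hεmeas)).aestronglyMeasurable)
      (Eventually.of_forall fun v => (ae_of_all _ fun ω => by simpa using hM (v - ε ω)))
      (integrable_const M)
      (ae_of_all _ fun ω =>
        ((hgcont.comp (continuous_id.sub continuous_const)).tendsto v₀))
  constructor
  · exact ((hGcont.abs.pow k)).aestronglyMeasurable
  · rw [hasFiniteIntegral_iff_ofReal (ae_of_all _ fun v => by positivity)]
    -- pointwise Jensen bound
    have hjensen : ∀ v : ℝ, ENNReal.ofReal (|∫ ω, g (v - ε ω) ∂ℙ| ^ k)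
        ≤ ∫⁻ ω, ENNReal.ofReal (|g (v - ε ω)| ^ k) ∂ℙ := by
      intro v
      have hintabs : Integrable (fun ω => |g (v - ε ω)|) ℙ := (hint g hgmeas ⟨M, hM⟩ v).abs
      have hintpow : Integrable (fun ω => |g (v - ε ω)| ^ k) ℙ := by
        refine (integrable_const (M ^ k)).mono' ?_ (ae_of_all _ fun ω => ?_)
        · exact ((hgmeas.comp (measurable_const.sub hεmeas)).abs.pow_const k).aestronglyMeasurable
        · rw [Real.norm_eq_abs, abs_of_nonneg (by positivity)]
          exact pow_le_pow_left₀ (abs_nonneg _) (hM _) k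
      have h1 : |∫ ω, g (v - ε ω) ∂ℙ| ≤ ∫ ω, |g (v - ε ω)| ∂ℙ := by
        simpa [Real.norm_eq_abs] using
          norm_integral_le_integral_norm (fun ω => g (v - ε ω)) (μ := ℙ)
      have h2 : |∫ ω, g (v - ε ω) ∂ℙ| ^ k ≤ (∫ ω, |g (v - ε ω)| ∂ℙ) ^ k :=
        pow_le_pow_left₀ (abs_nonneg _) h1 k
      have h3 : (∫ ω, |g (v - ε ω)| ∂ℙ) ^ k ≤ ∫ ω, |g (v - ε ω)| ^ k ∂ℙ := by
        have := (convexOn_pow k).map_integral_le (μ := ℙ)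
          (f := fun ω => |g (v - ε ω)|)
          ((continuous_pow k).continuousOn) isClosed_Ici
          (ae_of_all _ fun ω => Set.mem_Ici.mpr (abs_nonneg _)) hintabs
          (by simpa [Function.comp_def] using hintpow)
        simpa using this
      calc ENNReal.ofReal (|∫ ω, g (v - ε ω) ∂ℙ| ^ k)
          ≤ ENNReal.ofReal (∫ ω, |g (v - ε ω)| ^ k ∂ℙ) :=
            ENNReal.ofReal_le_ofReal (h2.trans h3)
        _ = ∫⁻ ω, ENNReal.ofReal (|g (v - ε ω)| ^ k) ∂ℙ :=
            ofReal_integral_eq_lintegral_ofReal hintpow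
              (ae_of_all _ fun ω => by positivity)
    calc ∫⁻ v, ENNReal.ofReal (|∫ ω, g (v - ε ω) ∂ℙ| ^ k)
        ≤ ∫⁻ v, ∫⁻ ω, ENNReal.ofReal (|g (v - ε ω)| ^ k) ∂ℙ := lintegral_mono hjensen
      _ = ∫⁻ ω, ∫⁻ v, ENNReal.ofReal (|g (v - ε ω)| ^ k) ∂(volume : Measure ℝ) ∂ℙ := by
          refine lintegral_lintegral_swap ?_
          exact ((((hgmeas.comp (measurable_fst.sub (hεmeas.comp
            measurable_snd))).abs.pow_const k)).ennreal_ofReal).aemeasurable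
      _ = ∫⁻ _ : Ω, ∫⁻ v, ENNReal.ofReal (|g v| ^ k) ∂(volume : Measure ℝ) ∂ℙ := by
          refine lintegral_congr fun ω => ?_
          exact lintegral_sub_right_eq_self (fun v => ENNReal.ofReal (|g v| ^ k)) (ε ω)
      _ = ∫⁻ v, ENNReal.ofReal (|g v| ^ k) ∂(volume : Measure ℝ) := by
          simp
      _ < ⊤ := by
          have := hLk.hasFiniteIntegral
          rwa [hasFiniteIntegral_iff_ofReal (ae_of_all _ fun v => by positivity)] at this

theorem lem_E
    {Ω : Type} [MeasureSpace Ω] [IsProbabilityMeasure (ℙ : Measure Ω)]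
    (ε Z : Ω → ℝ) (hεmeas : Measurable ε) (hZmeas : Measurable Z)
    (hindep : IndepFun ε Z ℙ)
    (fZ : ℝ → ℝ) (hfZmeas : Measurable fZ) (hfZnn : ∀ x, 0 ≤ fZ x)
    (hfZ : Measure.map Z ℙ = (volume : Measure ℝ).withDensity fun x => ENNReal.ofReal (fZ x))
    (k r : ℕ) (hk : 1 ≤ k)
    (hsmooth : ContDiff ℝ r fZ)
    (hbdd : ∀ j : ℕ, j ≤ r → ∃ M, ∀ x, |iteratedDeriv j fZ x| ≤ M)
    (hLk : Integrable fun v : ℝ => |iteratedDeriv r fZ v| ^ k) :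
    (Measure.map (fun ω => ε ω + Z ω) ℙ
      = (volume : Measure ℝ).withDensity fun v => ENNReal.ofReal (∫ ω, fZ (v - ε ω) ∂ℙ))
    ∧ (∀ v : ℝ, iteratedDeriv r (fun w => ∫ ω, fZ (w - ε ω) ∂ℙ) v
        = ∫ ω, iteratedDeriv r fZ (v - ε ω) ∂ℙ)
    ∧ Integrable fun v : ℝ => |∫ ω, iteratedDeriv r fZ (v - ε ω) ∂ℙ| ^ k := by
  have hint : ∀ (h : ℝ → ℝ), Measurable h → (∃ M, ∀ x, |h x| ≤ M) →
      ∀ v : ℝ, Integrable (fun ω => h (v - ε ω)) ℙ := by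
    rintro h hmeas ⟨M, hM⟩ v
    refine (integrable_const M).mono' ?_ ?_
    · exact (hmeas.comp ((measurable_const.sub hεmeas))).aestronglyMeasurable
    · exact ae_of_all _ fun ω => by simpa using hM (v - ε ω)
  have hbdd0 : ∃ M, ∀ x, |fZ x| ≤ M := by simpa using hbdd 0 (Nat.zero_le r)
  obtain ⟨M, hM⟩ := hbdd r le_rfl
  refine ⟨lem_E_part1 ε Z hεmeas hZmeas hindep fZ hfZmeas hfZnn hfZ
      (hint fZ hfZmeas hbdd0),
    lem_E_part2 ε hεmeas fZ r hsmooth hbdd hint r le_rfl,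
    lem_E_part3 ε hεmeas (iteratedDeriv r fZ)
      (hsmooth.continuous_iteratedDeriv r (by exact_mod_cast le_rfl)) M hM k hLk hint⟩
end
end
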